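/- For every $\xi = (\xi_0,\ldots,\xi_n) \in \mathbb{R}^{n+1}$ and every $v = (v_0,\ldots,v_n)$ with $0 \le v_i \le 1$ for all $i$, the quadratic form satisfies $\xi^T (P - B(v)) \xi \ge (K - 2n\kappa)\,\|\xi\|_2^2$, where $P = K I_{n+1}$ and $B(v)$ is the matrix with entries $B(v)_{ii} = \sum_{j\ne i}(K_{ij}-K)v_j$ and $B(v)_{ij} = -(K_{ij}-K)v_i$ for $i \ne j$. -/

import Mathlib

open Finset

/-- coercivity of the linearized diffusion matrix:
`ξᵀ (P - B(v)) ξ ≥ (K - 2nκ) ‖ξ‖₂²` for `v ∈ [0,1]^{n+1}`. -/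
theorem stmt_1 (n : ℕ) (hn : 0 < n) (K : Fin (n + 1) → Fin (n + 1) → ℝ)
    (Kc κ : ℝ) (hκ : 0 ≤ κ)
    (hnonneg : ∀ i j : Fin (n + 1), i ≠ j → 0 ≤ K i j)
    (hsym : ∀ i j : Fin (n + 1), K i j = K j i)
    (hclose : ∀ i j : Fin (n + 1), i ≠ j → |K i j - Kc| ≤ κ)
    (v ξ : Fin (n + 1) → ℝ) (hv : ∀ i, 0 ≤ v i ∧ v i ≤ 1)
    (B P : Matrix (Fin (n + 1)) (Fin (n + 1)) ℝ)
    (hB : ∀ i j, B i j = if i = j then ∑ k ∈ Finset.univ.erase i, (K i k - Kc) * v k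
      else -(K i j - Kc) * v i)
    (hP : P = Kc • (1 : Matrix (Fin (n + 1)) (Fin (n + 1)) ℝ)) :
    dotProduct ξ ((P - B).mulVec ξ) ≥ (Kc - 2 * n * κ) * ∑ i : Fin (n + 1), ξ i ^ 2 := by
  set S := ∑ i : Fin (n + 1), ξ i ^ 2 with hSdef
  have hScard : ∀ i : Fin (n + 1), (Finset.univ.erase i).card = n := by
    intro i
    rw [Finset.card_erase_of_mem (Finset.mem_univ i)]
    simp
  have hBdiag : ∀ i, B i i ≤ n * κ := by
    intro i
    rw [hB, if_pos rfl]
    calc ∑ k ∈ Finset.univ.erase i, (K i k - Kc) * v k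
        ≤ ∑ _k ∈ Finset.univ.erase i, κ := by
          apply Finset.sum_le_sum
          intro k hk
          have hk' : i ≠ k := (Finset.ne_of_mem_erase hk).symm
          have h1 := (abs_le.mp (hclose i k hk')).2
          have h2 := (hv k).1
          have h3 := (hv k).2
          nlinarith
      _ = n * κ := by rw [Finset.sum_const, hScard]; simp [nsmul_eq_mul]
  have bound : ∀ i j : Fin (n + 1), ξ i * (B i j * ξ j) ≤
      (if i = j then (n : ℝ) * κ * ξ i ^ 2 else κ * (ξ i ^ 2 + ξ j ^ 2) / 2) := by
    intro i j
    by_cases h : i = j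
    · subst h
      rw [if_pos rfl]
      have := hBdiag i
      nlinarith [sq_nonneg (ξ i)]
    · rw [if_neg h, hB, if_neg h]
      have h1 := abs_le.mp (hclose i j h)
      have h2 := (hv i).1
      have h3 := (hv i).2
      have hb : |(K i j - Kc) * v i| ≤ κ := by
        rw [abs_mul]
        calc |K i j - Kc| * |v i| ≤ κ * 1 := by
              apply mul_le_mul (hclose i j h) _ (abs_nonneg _) hκ
              rw [abs_of_nonneg h2]; exact h3
          _ = κ := mul_one κ
      obtain ⟨hb1, hb2⟩ := abs_le.mp hb
      nlinarith [mul_nonneg (by linarith : (0:ℝ) ≤ κ + (K i j - Kc) * v i) (sq_nonneg (ξ i + ξ j)),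
        mul_nonneg (by linarith : (0:ℝ) ≤ κ - (K i j - Kc) * v i) (sq_nonneg (ξ i - ξ j))]
  have key : dotProduct ξ (B.mulVec ξ) ≤ 2 * n * κ * S := by
    have expand : dotProduct ξ (B.mulVec ξ) = ∑ i, ∑ j, ξ i * (B i j * ξ j) := by
      simp [dotProduct, Matrix.mulVec, Finset.mul_sum]
    rw [expand]
    calc ∑ i, ∑ j, ξ i * (B i j * ξ j)
        ≤ ∑ i, ∑ j, (if i = j then (n : ℝ) * κ * ξ i ^ 2 else κ * (ξ i ^ 2 + ξ j ^ 2) / 2) :=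
          Finset.sum_le_sum fun i _ => Finset.sum_le_sum fun j _ => bound i j
      _ = ∑ i : Fin (n + 1), ((n : ℝ) * κ * ξ i ^ 2
            + (κ / 2) * ((n : ℝ) * ξ i ^ 2 + (S - ξ i ^ 2))) := by
          apply Finset.sum_congr rfl
          intro i _
          rw [← Finset.add_sum_erase _ _ (Finset.mem_univ i), if_pos rfl]
          congr 1
          have h1 : ∀ j ∈ Finset.univ.erase i,
              (if i = j then (n : ℝ) * κ * ξ i ^ 2 else κ * (ξ i ^ 2 + ξ j ^ 2) / 2)
              = κ / 2 * ξ i ^ 2 + κ / 2 * ξ j ^ 2 := by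
            intro j hj
            rw [if_neg (Finset.ne_of_mem_erase hj).symm]; ring
          rw [Finset.sum_congr rfl h1, Finset.sum_add_distrib, Finset.sum_const, hScard,
            ← Finset.mul_sum, Finset.sum_erase_eq_sub (Finset.mem_univ i), nsmul_eq_mul]
          ring
      _ = 2 * n * κ * S := by
          rw [Finset.sum_add_distrib, ← Finset.mul_sum]
          have : ∑ i : Fin (n + 1), (κ / 2) * ((n : ℝ) * ξ i ^ 2 + (S - ξ i ^ 2)) =
              (κ / 2) * (((n : ℝ) - 1) * S + (n + 1) * S) := by
            rw [← Finset.mul_sum]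
            congr 1
            rw [Finset.sum_add_distrib, ← Finset.mul_sum, Finset.sum_sub_distrib,
              Finset.sum_const, Finset.card_univ, Fintype.card_fin, nsmul_eq_mul]
            push_cast
            ring
          rw [this]
          ring
  have hPξ : dotProduct ξ (P.mulVec ξ) = Kc * S := by
    rw [hP, Matrix.smul_mulVec, Matrix.one_mulVec, dotProduct_smul]
    simp only [smul_eq_mul, hSdef]
    congr 1
    simp [dotProduct, pow_two]
  rw [ge_iff_le, Matrix.sub_mulVec, dotProduct_sub, hPξ]
  linarith [key]
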